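/- arXiv:1606.01835 — 4 statements merged into one kernel-verified Lean document; each statement's English description precedes it below -/
import Mathlib

section
/- Let X and Y be strictly positive random variables with X ≤_Lt Y, and suppose log X and log Y are integrable. Then 𝔼[log X] ≤ 𝔼[log Y]. -/
set_option maxHeartbeats 1000000


open MeasureTheory Set

/-- `∫ t in (0,∞), exp (-(t*s)) dt = 1/s` for `s > 0`. -/
lemma aux_exp_integral_Ioi {s : ℝ} (hs : 0 < s) :
    ∫ t in Ioi (0:ℝ), Real.exp (-(t * s)) = 1 / s := by
  have hderiv : ∀ x ∈ Ici (0:ℝ),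
      HasDerivAt (fun t : ℝ => -Real.exp (-(t * s)) / s) (Real.exp (-(x * s))) x := by
    intro x _
    have h1 : HasDerivAt (fun t : ℝ => -(t * s)) (-s) x := by
      simpa using ((hasDerivAt_id x).mul_const s).fun_neg
    have h2 := (h1.exp.fun_neg).div_const s
    refine h2.congr_deriv ?_
    field_simp
  have hint : IntegrableOn (fun x : ℝ => Real.exp (-(x * s))) (Ioi (0:ℝ)) := by
    have := exp_neg_integrableOn_Ioi 0 hs
    simpa [neg_mul, mul_comm] using this
  have htend : Filter.Tendsto (fun t : ℝ => -Real.exp (-(t * s)) / s)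
      Filter.atTop (nhds (-0 / s)) := by
    refine Filter.Tendsto.div_const (Filter.Tendsto.neg ?_) _
    refine Real.tendsto_exp_atBot.comp ?_
    have : Filter.Tendsto (fun t : ℝ => -s * t) Filter.atTop Filter.atBot :=
      Filter.tendsto_id.const_mul_atTop_of_neg (neg_neg_iff_pos.2 hs)
    simpa [neg_mul, mul_comm] using this
  have := MeasureTheory.integral_Ioi_of_hasDerivAt_of_tendsto' hderiv hint htend
  rw [this]
  field_simp
  simp

/-- Frullani-type identity and integrability, case `a ≤ b`. -/
lemma aux_frullani_le {a b : ℝ} (ha : 0 < a) (hab : a ≤ b) :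
    IntegrableOn (fun t => (Real.exp (-(t * a)) - Real.exp (-(t * b))) / t) (Ioi (0:ℝ)) ∧
    ∫ t in Ioi (0:ℝ), (Real.exp (-(t * a)) - Real.exp (-(t * b))) / t
      = Real.log b - Real.log a := by
  have hb : 0 < b := ha.trans_le hab
  set F : ℝ × ℝ → ℝ := fun p => Real.exp (-(p.1 * p.2)) with hF
  have hFcont : Continuous F := by
    apply Real.continuous_exp.comp
    exact (continuous_fst.mul continuous_snd).neg
  set ν := (volume.restrict (Ioi (0:ℝ))).prod (volume.restrict (Ioc a b)) with hν
  have hFmeas : AEStronglyMeasurable F ν := hFcont.aestronglyMeasurable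
  have hFint : Integrable F ν := by
    rw [integrable_prod_iff hFmeas]
    constructor
    · exact Filter.Eventually.of_forall fun t =>
        (hFcont.comp (Continuous.prodMk_right t)).integrableOn_Ioc
    · have h' : IntegrableOn (fun t : ℝ => Real.exp (-(t * a))) (Ioi (0:ℝ)) := by
        have := exp_neg_integrableOn_Ioi 0 ha
        simpa [neg_mul, mul_comm] using this
      have hbound : IntegrableOn
          (fun t : ℝ => (b - a) * Real.exp (-(t * a))) (Ioi (0:ℝ)) := h'.const_mul _
      refine Integrable.mono' hbound (hFmeas.norm.integral_prod_right') ?_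
      filter_upwards [ae_restrict_mem measurableSet_Ioi] with t ht
      have h1 : ∀ s ∈ Ioc a b, ‖F (t, s)‖ ≤ Real.exp (-(t * a)) := by
        intro s hs
        rw [Real.norm_eq_abs, abs_of_pos (Real.exp_pos _)]
        apply Real.exp_le_exp.2
        have := hs.1.le
        nlinarith [le_of_lt (mem_Ioi.1 ht)]
      have h2 : ∫ s in Ioc a b, ‖F (t, s)‖
          ≤ ∫ s in Ioc a b, Real.exp (-(t * a)) := by
        apply setIntegral_mono_on
        · exact ((hFcont.comp (Continuous.prodMk_right t)).norm).integrableOn_Ioc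
        · exact integrableOn_const measure_Ioc_lt_top.ne
        · exact measurableSet_Ioc
        · exact h1
      have h3 : ∫ s in Ioc a b, Real.exp (-(t * a)) = (b - a) * Real.exp (-(t * a)) := by
        rw [setIntegral_const, measureReal_def, Real.volume_Ioc, smul_eq_mul]
        congr 1
        exact ENNReal.toReal_ofReal (by linarith)
      calc ‖∫ s in Ioc a b, ‖F (t, s)‖‖
          = ∫ s in Ioc a b, ‖F (t, s)‖ := by
            rw [Real.norm_eq_abs, abs_of_nonneg]
            exact integral_nonneg fun s => norm_nonneg _
        _ ≤ (b - a) * Real.exp (-(t * a)) := h3 ▸ h2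
  -- key pointwise identity
  have key : ∀ t ∈ Ioi (0:ℝ),
      ∫ s in Ioc a b, Real.exp (-(t * s))
        = (Real.exp (-(t * a)) - Real.exp (-(t * b))) / t := by
    intro t ht
    have ht' : (0:ℝ) < t := ht
    rw [← intervalIntegral.integral_of_le hab]
    have hderiv : ∀ s ∈ Set.uIcc a b,
        HasDerivAt (fun s : ℝ => -Real.exp (-(t * s)) / t) (Real.exp (-(t * s))) s := by
      intro s _
      have h1 : HasDerivAt (fun s : ℝ => -(t * s)) (-t) s := by
        simpa using ((hasDerivAt_id s).const_mul t).fun_neg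
      have h2 := (h1.exp.fun_neg).div_const t
      refine h2.congr_deriv ?_
      field_simp
    have hII : IntervalIntegrable (fun s : ℝ => Real.exp (-(t * s))) volume a b :=
      (Real.continuous_exp.comp ((continuous_const.mul continuous_id).neg)).intervalIntegrable a b
    rw [intervalIntegral.integral_eq_sub_of_hasDerivAt hderiv hII]
    field_simp
    ring
  have hswap := MeasureTheory.integral_integral_swap
      (f := fun (t : ℝ) (s : ℝ) => Real.exp (-(t * s))) hFint
  have hmarg : IntegrableOn
      (fun t : ℝ => ∫ s in Ioc a b, Real.exp (-(t * s))) (Ioi (0:ℝ)) :=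
    hFint.integral_prod_left
  constructor
  · exact hmarg.congr (by
      filter_upwards [ae_restrict_mem measurableSet_Ioi] with t ht
      exact key t ht)
  · calc ∫ t in Ioi (0:ℝ), (Real.exp (-(t * a)) - Real.exp (-(t * b))) / t
        = ∫ t in Ioi (0:ℝ), ∫ s in Ioc a b, Real.exp (-(t * s)) :=
          (setIntegral_congr_fun measurableSet_Ioi fun t ht => (key t ht).symm)
      _ = ∫ s in Ioc a b, ∫ t in Ioi (0:ℝ), Real.exp (-(t * s)) := hswap
      _ = ∫ s in Ioc a b, 1 / s := by
          refine setIntegral_congr_fun measurableSet_Ioc fun s hs => ?_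
          exact aux_exp_integral_Ioi (ha.trans hs.1)
      _ = ∫ s in a..b, 1 / s := (intervalIntegral.integral_of_le hab).symm
      _ = Real.log (b / a) := integral_one_div_of_pos ha hb
      _ = Real.log b - Real.log a := Real.log_div hb.ne' ha.ne'

/-- Full version: integrability, value, and value of the norm integral. -/
lemma aux_frullani {a b : ℝ} (ha : 0 < a) (hb : 0 < b) :
    IntegrableOn (fun t => (Real.exp (-(t * a)) - Real.exp (-(t * b))) / t) (Ioi (0:ℝ)) ∧
    (∫ t in Ioi (0:ℝ), (Real.exp (-(t * a)) - Real.exp (-(t * b))) / t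
      = Real.log b - Real.log a) ∧
    (∫ t in Ioi (0:ℝ), ‖(Real.exp (-(t * a)) - Real.exp (-(t * b))) / t‖
      = |Real.log b - Real.log a|) := by
  rcases le_total a b with hab | hba
  · obtain ⟨h1, h2⟩ := aux_frullani_le ha hab
    refine ⟨h1, h2, ?_⟩
    have hnn : ∀ t ∈ Ioi (0:ℝ),
        ‖(Real.exp (-(t * a)) - Real.exp (-(t * b))) / t‖
          = (Real.exp (-(t * a)) - Real.exp (-(t * b))) / t := by
      intro t ht
      rw [Real.norm_eq_abs, abs_of_nonneg]
      apply div_nonneg _ (le_of_lt ht)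
      have : -(t * b) ≤ -(t * a) := by nlinarith [le_of_lt (show (0:ℝ) < t from ht)]
      simpa using Real.exp_le_exp.2 this
    rw [setIntegral_congr_fun measurableSet_Ioi hnn, h2,
      abs_of_nonneg (sub_nonneg.2 (Real.log_le_log ha hab))]
  · obtain ⟨h1, h2⟩ := aux_frullani_le hb hba
    have heq : (fun t : ℝ => (Real.exp (-(t * a)) - Real.exp (-(t * b))) / t)
        = fun t => -((Real.exp (-(t * b)) - Real.exp (-(t * a))) / t) := by
      funext t; ring
    refine ⟨?_, ?_, ?_⟩
    · rw [heq]; exact h1.neg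
    · rw [heq, integral_neg, h2]; ring
    · have hnn : ∀ t ∈ Ioi (0:ℝ),
          ‖(Real.exp (-(t * a)) - Real.exp (-(t * b))) / t‖
            = (Real.exp (-(t * b)) - Real.exp (-(t * a))) / t := by
        intro t ht
        rw [Real.norm_eq_abs]
        rw [show (Real.exp (-(t * a)) - Real.exp (-(t * b))) / t
            = -((Real.exp (-(t * b)) - Real.exp (-(t * a))) / t) by ring, abs_neg,
          abs_of_nonneg]
        apply div_nonneg _ (le_of_lt ht)
        have : -(t * a) ≤ -(t * b) := by nlinarith [le_of_lt (show (0:ℝ) < t from ht)]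
        simpa using Real.exp_le_exp.2 this
      rw [setIntegral_congr_fun measurableSet_Ioi hnn, h2,
        abs_of_nonpos (sub_nonpos.2 (Real.log_le_log hb hba))]
      ring

/-- If `X` and `Y` are strictly positive random variables with
`X ≤_Lt Y` (i.e. `𝔼[exp(−λX)] ≥ 𝔼[exp(−λY)]` for all `λ ≥ 0`) and `log X`, `log Y`
are integrable, then `𝔼[log X] ≤ 𝔼[log Y]`. -/
theorem expLog_le_of_laplaceOrder
    {Ω : Type*} [MeasurableSpace Ω] (μ : Measure Ω) [IsProbabilityMeasure μ]
    (X Y : Ω → ℝ) (hX : Measurable X) (hY : Measurable Y)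
    (hXpos : ∀ o, 0 < X o) (hYpos : ∀ o, 0 < Y o)
    (hLt : ∀ lam : ℝ, 0 ≤ lam →
      ∫ o, Real.exp (-lam * Y o) ∂μ ≤ ∫ o, Real.exp (-lam * X o) ∂μ)
    (hXint : Integrable (fun o => Real.log (X o)) μ)
    (hYint : Integrable (fun o => Real.log (Y o)) μ) :
    ∫ o, Real.log (X o) ∂μ ≤ ∫ o, Real.log (Y o) ∂μ := by
  set f : Ω → ℝ → ℝ :=
    fun o t => (Real.exp (-(t * X o)) - Real.exp (-(t * Y o))) / t with hf
  set ν := μ.prod (volume.restrict (Ioi (0:ℝ))) with hν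
  have hmeas : AEStronglyMeasurable (Function.uncurry f) ν := by
    apply Measurable.aestronglyMeasurable
    apply Measurable.div _ measurable_snd
    exact (((measurable_snd.mul (hX.comp measurable_fst)).neg.exp).sub
      ((measurable_snd.mul (hY.comp measurable_fst)).neg.exp))
  have hInt : Integrable (Function.uncurry f) ν := by
    rw [hν, integrable_prod_iff hmeas]
    constructor
    · exact Filter.Eventually.of_forall fun o =>
        (aux_frullani (hXpos o) (hYpos o)).1
    · have : Integrable (fun o => |Real.log (Y o) - Real.log (X o)|) μ :=
        (hYint.sub hXint).abs
      apply this.congr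
      exact Filter.Eventually.of_forall fun o =>
        ((aux_frullani (hXpos o) (hYpos o)).2.2).symm
  have hswap := MeasureTheory.integral_integral_swap (f := f) hInt
  have hLHS : ∫ o, (∫ t in Ioi (0:ℝ), f o t) ∂μ
      = (∫ o, Real.log (Y o) ∂μ) - ∫ o, Real.log (X o) ∂μ := by
    rw [show (fun o => ∫ t in Ioi (0:ℝ), f o t)
        = fun o => Real.log (Y o) - Real.log (X o) from
      funext fun o => (aux_frullani (hXpos o) (hYpos o)).2.1]
    exact integral_sub hYint hXint
  have hRHS : 0 ≤ ∫ t in Ioi (0:ℝ), (∫ o, f o t ∂μ) := by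
    apply setIntegral_nonneg measurableSet_Ioi
    intro t ht
    have ht' : (0:ℝ) < t := ht
    have hiX : Integrable (fun o => Real.exp (-(t * X o))) μ := by
      refine Integrable.mono' (integrable_const 1)
        ((hX.const_mul t).neg.exp.aestronglyMeasurable) ?_
      refine Filter.Eventually.of_forall fun o => ?_
      rw [Real.norm_eq_abs, abs_of_pos (Real.exp_pos _)]
      exact Real.exp_le_one_iff.2 (by nlinarith [(hXpos o).le, ht'.le])
    have hiY : Integrable (fun o => Real.exp (-(t * Y o))) μ := by
      refine Integrable.mono' (integrable_const 1)
        ((hY.const_mul t).neg.exp.aestronglyMeasurable) ?_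
      refine Filter.Eventually.of_forall fun o => ?_
      rw [Real.norm_eq_abs, abs_of_pos (Real.exp_pos _)]
      exact Real.exp_le_one_iff.2 (by nlinarith [(hYpos o).le, ht'.le])
    have hval : ∫ o, f o t ∂μ
        = ((∫ o, Real.exp (-(t * X o)) ∂μ) - ∫ o, Real.exp (-(t * Y o)) ∂μ) / t := by
      simp only [hf]
      rw [integral_div, integral_sub hiX hiY]
    rw [hval]
    apply div_nonneg _ ht'.le
    have := hLt t ht'.le
    simp only [neg_mul] at this
    linarith [this]
  rw [hswap] at hLHS
  linarith [hLHS ▸ hRHS]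
end

section
/- Let X and Y be nonnegative integrable random variables with X ≤_Lt Y and 𝔼[X] = 𝔼[Y], and suppose X log X and Y log Y are integrable (with the convention 0 log 0 = 0). Then 𝔼[X log X] ≥ 𝔼[Y log Y]. -/
open MeasureTheory

open Set Filter Real

lemma one_sub_exp_neg_le (u : ℝ) : 1 - Real.exp (-u) ≤ u := by
  have := Real.add_one_le_exp (-u); linarith

lemma exp_term_nonneg (u : ℝ) : 0 ≤ Real.exp (-u) - 1 + u := by
  have := Real.add_one_le_exp (-u); linarith

lemma exp_term_le_lin {u : ℝ} (hu : 0 ≤ u) : Real.exp (-u) - 1 + u ≤ u := by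
  have := Real.exp_le_one_iff.mpr (neg_nonpos.mpr hu); linarith

lemma exp_term_le_sq {u : ℝ} (hu : 0 ≤ u) : Real.exp (-u) - 1 + u ≤ u ^ 2 := by
  rcases le_or_gt u 1 with h | h
  · have hb := Real.exp_bound (x := -u) (by rw [abs_neg, abs_of_nonneg hu]; exact h) (n := 2) (by norm_num)
    have : |Real.exp (-u) - (1 + -u)| ≤ |(-u)| ^ 2 * (3 / (2 * 2)) := by
      simpa [Finset.sum_range_succ, Nat.factorial] using hb
    rw [abs_neg, abs_of_nonneg hu] at this
    have h1 : Real.exp (-u) - 1 + u ≤ u ^ 2 * (3/4) := by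
      have := abs_le.mp this
      linarith [this.2]
    nlinarith [sq_nonneg u]
  · nlinarith [exp_term_le_lin hu, sq_nonneg u]

lemma abs_exp_sub_exp {a b : ℝ} (ha : 0 ≤ a) (hb : 0 ≤ b) :
    |Real.exp (-a) - Real.exp (-b)| ≤ |a - b| * Real.exp (-(min a b)) := by
  wlog h : b ≤ a generalizing a b
  · rw [abs_sub_comm, abs_sub_comm a b, min_comm]; exact this hb ha (le_of_not_ge h)
  have h1 : Real.exp (-a) ≤ Real.exp (-b) := Real.exp_le_exp.mpr (by linarith)
  rw [abs_sub_comm, abs_of_nonneg (by linarith), min_eq_right h, abs_of_nonneg (by linarith)]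
  have one_sub : 1 - Real.exp (-(a-b)) ≤ a - b := by
    have := Real.add_one_le_exp (-(a-b)); linarith
  have : Real.exp (-a) = Real.exp (-b) * Real.exp (-(a-b)) := by
    rw [← Real.exp_add]; ring_nf
  rw [this]
  have h3 : (0:ℝ) < Real.exp (-b) := Real.exp_pos _
  nlinarith [Real.exp_pos (-(a-b))]

lemma integral_exp_neg_mul_Ioi {s : ℝ} (hs : 0 < s) :
    ∫ t in Ioi (0:ℝ), Real.exp (-(t*s)) = 1/s := by
  have hd : ∀ t ∈ Ioi (0:ℝ), HasDerivAt (fun t => -Real.exp (-(t*s))/s) (Real.exp (-(t*s))) t := by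
    intro t _
    have h1 : HasDerivAt (fun t : ℝ => -(t*s)) (-s) t := by
      exact ((hasDerivAt_id' t).mul_const s).neg.congr_deriv (by ring)
    have h2 := (h1.exp.neg).div_const s
    refine h2.congr_deriv ?_
    field_simp [hs.ne']
  have hint : IntegrableOn (fun t => Real.exp (-(t*s))) (Ioi (0:ℝ)) := by
    have := exp_neg_integrableOn_Ioi 0 hs
    refine this.congr_fun (fun t _ => by ring_nf) measurableSet_Ioi
  have htend : Tendsto (fun t => -Real.exp (-(t*s))/s) atTop (nhds 0) := by
    have : Tendsto (fun t : ℝ => -(t*s)) atTop atBot := by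
      apply tendsto_neg_atBot_iff.mpr
      exact Tendsto.atTop_mul_const hs tendsto_id
    have := (Real.tendsto_exp_atBot.comp this).neg.div_const s
    simpa using this
  have hcont : ContinuousWithinAt (fun t => -Real.exp (-(t*s))/s) (Ici 0) 0 := by
    apply Continuous.continuousWithinAt
    continuity
  have := integral_Ioi_of_hasDerivAt_of_tendsto hcont hd hint htend
  rw [this]
  simp
  ring

lemma frullani_integrable {s : ℝ} (hs : 0 < s) :
    IntegrableOn (fun t => (Real.exp (-t) - Real.exp (-(t*s)))/t) (Ioi (0:ℝ)) := by
  have hmin : 0 < min 1 s := lt_min one_pos hs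
  have hmaj : IntegrableOn (fun t => |1 - s| * Real.exp (-(min 1 s) * t)) (Ioi (0:ℝ)) :=
    (exp_neg_integrableOn_Ioi 0 hmin).const_mul _
  refine Integrable.mono' hmaj ?_ ?_
  · apply Measurable.aestronglyMeasurable
    fun_prop
  · filter_upwards [ae_restrict_mem measurableSet_Ioi] with t ht
    have ht' : 0 < t := ht
    rw [Real.norm_eq_abs, abs_div, abs_of_pos ht']
    rw [div_le_iff₀ ht']
    have := abs_exp_sub_exp (le_of_lt ht') (by positivity : (0:ℝ) ≤ t*s)
    calc |Real.exp (-t) - Real.exp (-(t*s))| ≤ |t - t*s| * Real.exp (-(min t (t*s))) := this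
      _ = |1 - s| * Real.exp (-(min 1 s) * t) * t := by
          have hmm : min t (t*s) = t * min 1 s := by
            rcases le_total 1 s with h | h
            · rw [min_eq_left h, min_eq_left (by nlinarith), mul_one]
            · rw [min_eq_right h, min_eq_right (by nlinarith)]
          rw [hmm, show t - t*s = t * (1-s) by ring, abs_mul, abs_of_pos ht']
          ring_nf
      _ = |1 - s| * Real.exp (-(min 1 s) * t) * t := rfl

noncomputable def kk (t x : ℝ) : ℝ := (Real.exp (-(t*x)) - 1 + t*x*Real.exp (-t))/t^2


lemma kk_num_decomp (t x : ℝ) :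
    Real.exp (-(t*x)) - 1 + t*x*Real.exp (-t)
      = (Real.exp (-(t*x)) - 1 + t*x) - (t*x) * (1 - Real.exp (-t)) := by ring

-- (a) small t bound
lemma kk_abs_le_small {t x : ℝ} (ht : 0 < t) (ht1 : t ≤ 1) (hx : 0 ≤ x) :
    |kk t x| ≤ x^2 + x := by
  have htx : 0 ≤ t*x := by positivity
  have hA0 := exp_term_nonneg (t*x)
  have hA2 := exp_term_le_sq htx
  have hB0 : 0 ≤ (t*x) * (1 - Real.exp (-t)) := by
    have := Real.exp_le_one_iff.mpr (neg_nonpos.mpr ht.le)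
    nlinarith
  have hB1 : (t*x) * (1 - Real.exp (-t)) ≤ t^2 * x := by
    have := one_sub_exp_neg_le t
    nlinarith [Real.exp_pos (-t)]
  have hnum : |Real.exp (-(t*x)) - 1 + t*x*Real.exp (-t)| ≤ t^2*x^2 + t^2*x := by
    rw [kk_num_decomp]
    rw [abs_le]
    constructor <;> nlinarith
  unfold kk
  rw [abs_div, abs_of_pos (by positivity : (0:ℝ) < t^2), div_le_iff₀ (by positivity : (0:ℝ) < t^2)]
  nlinarith

-- (b) large t bound
lemma kk_abs_le_large {t x : ℝ} (ht : 1 < t) (hx : 0 ≤ x) :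
    |kk t x| ≤ 1/t^2 + x * Real.exp (-t) := by
  have ht0 : 0 < t := by linarith
  have htx : 0 ≤ t*x := by positivity
  have h1 : Real.exp (-(t*x)) ≤ 1 := Real.exp_le_one_iff.mpr (by linarith)
  have h2 : 0 < Real.exp (-(t*x)) := Real.exp_pos _
  have hnum : |Real.exp (-(t*x)) - 1 + t*x*Real.exp (-t)| ≤ 1 + t*x*Real.exp (-t) := by
    rw [abs_le]
    constructor <;> nlinarith [Real.exp_pos (-t)]
  unfold kk
  rw [abs_div, abs_of_pos (by positivity : (0:ℝ) < t^2), div_le_iff₀ (by positivity : (0:ℝ) < t^2)]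
  have hts : (1/t^2) * t^2 = 1 := by field_simp
  have hmono : x * Real.exp (-t) * t ≤ x * Real.exp (-t) * t^2 := by
    have h1 : (0:ℝ) ≤ x * Real.exp (-t) := mul_nonneg hx (Real.exp_pos (-t)).le
    nlinarith [mul_nonneg h1 (by nlinarith : (0:ℝ) ≤ t^2 - t)]
  nlinarith [Real.exp_pos (-t)]

-- (c) x/t bound
lemma kk_abs_le_div {t x : ℝ} (ht : 0 < t) (hx : 0 ≤ x) :
    |kk t x| ≤ x/t + x := by
  have htx : 0 ≤ t*x := by positivity
  have hA0 := exp_term_nonneg (t*x)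
  have hA1 := exp_term_le_lin htx
  have hB0 : 0 ≤ (t*x) * (1 - Real.exp (-t)) := by
    have := Real.exp_le_one_iff.mpr (neg_nonpos.mpr ht.le)
    nlinarith
  have hB1 : (t*x) * (1 - Real.exp (-t)) ≤ t*x := by
    nlinarith [Real.exp_pos (-t)]
  have hnum : |Real.exp (-(t*x)) - 1 + t*x*Real.exp (-t)| ≤ t*x := by
    rw [kk_num_decomp, abs_le]
    constructor <;> nlinarith
  unfold kk
  rw [abs_div, abs_of_pos (by positivity : (0:ℝ) < t^2), div_le_iff₀ (by positivity : (0:ℝ) < t^2)]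
  calc |Real.exp (-(t*x)) - 1 + t*x*Real.exp (-t)| ≤ t*x := hnum
    _ ≤ (x/t + x) * t^2 := by
        have : x/t * t^2 = x * t := by field_simp
        nlinarith

lemma kk_measurable (x : ℝ) : Measurable (fun t => kk t x) := by
  unfold kk; fun_prop

-- majorant integrable on Ioi 1
lemma maj_large_integrable (x : ℝ) :
    IntegrableOn (fun t => 1/t^2 + x * Real.exp (-t)) (Ioi (1:ℝ)) := by
  apply Integrable.add
  · have h := integrableOn_Ioi_rpow_of_lt (by norm_num : (-2:ℝ) < -1) one_pos
    refine h.congr ?_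
    filter_upwards [ae_restrict_mem measurableSet_Ioi] with t ht
    have h0 : (0:ℝ) ≤ t := by linarith [mem_Ioi.mp ht]
    rw [Real.rpow_neg h0, show (2:ℝ) = ((2:ℕ):ℝ) by norm_num, Real.rpow_natCast, one_div]
  · have h : Integrable (fun t => x * Real.exp (-1*t)) (volume.restrict (Ioi (1:ℝ))) :=
      (exp_neg_integrableOn_Ioi 1 one_pos).const_mul x
    refine h.congr ?_
    filter_upwards with t
    norm_num

lemma kk_integrableOn_Ioc01 {x : ℝ} (hx : 0 ≤ x) :
    IntegrableOn (fun t => kk t x) (Ioc (0:ℝ) 1) := by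
  refine Integrable.mono' (integrableOn_const (C := x^2 + x) ?_) ((kk_measurable x).aestronglyMeasurable) ?_
  · rw [Real.volume_Ioc]; exact ENNReal.ofReal_ne_top
  · filter_upwards [ae_restrict_mem measurableSet_Ioc] with t ht
    rw [Real.norm_eq_abs]
    exact kk_abs_le_small ht.1 ht.2 hx

lemma kk_integrableOn_Ioi1 {x : ℝ} (hx : 0 ≤ x) :
    IntegrableOn (fun t => kk t x) (Ioi (1:ℝ)) := by
  refine Integrable.mono' (maj_large_integrable x) ((kk_measurable x).aestronglyMeasurable) ?_
  filter_upwards [ae_restrict_mem measurableSet_Ioi] with t ht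
  rw [Real.norm_eq_abs]
  exact kk_abs_le_large ht hx

lemma kk_integrableOn {x : ℝ} (hx : 0 ≤ x) :
    IntegrableOn (fun t => kk t x) (Ioi (0:ℝ)) := by
  rw [show Ioi (0:ℝ) = Ioc 0 1 ∪ Ioi 1 from (Ioc_union_Ioi_eq_Ioi zero_le_one).symm]
  exact (kk_integrableOn_Ioc01 hx).union (kk_integrableOn_Ioi1 hx)

noncomputable def Gfr : ℝ → ℝ := fun s => ∫ t in Ioi (0:ℝ), (Real.exp (-t) - Real.exp (-(t*s)))/t

lemma Gfr_hasDerivAt {u : ℝ} (hu : 0 < u) : HasDerivAt Gfr (1/u) u := by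
  have key := hasDerivAt_integral_of_dominated_loc_of_deriv_le
    (F := fun (s : ℝ) (t : ℝ) => (Real.exp (-t) - Real.exp (-(t*s)))/t)
    (F' := fun (s : ℝ) (t : ℝ) => Real.exp (-(t*s)))
    (μ := volume.restrict (Ioi (0:ℝ))) (x₀ := u)
    (bound := fun t => Real.exp (-(u/2) * t))
    (s := Metric.ball u (u/2)) (Metric.ball_mem_nhds u (half_pos hu)) ?_ (frullani_integrable hu) ?_ ?_ ?_ ?_
  · have := key.2
    rwa [integral_exp_neg_mul_Ioi hu] at this
  · filter_upwards with s
    apply Measurable.aestronglyMeasurable; fun_prop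
  · apply Measurable.aestronglyMeasurable; fun_prop
  · filter_upwards [ae_restrict_mem measurableSet_Ioi] with t ht s hs
    have ht' : (0:ℝ) < t := ht
    have hs' : u/2 < s := by
      have := abs_lt.mp (mem_ball_iff_norm.mp hs)
      linarith [this.1]
    rw [Real.norm_eq_abs, abs_exp]
    apply Real.exp_le_exp.mpr
    nlinarith
  · exact exp_neg_integrableOn_Ioi 0 (half_pos hu)
  · filter_upwards [ae_restrict_mem measurableSet_Ioi] with t ht s _
    have ht' : (0:ℝ) < t := ht
    have h1 : HasDerivAt (fun x : ℝ => -(t*x)) (-t) s := by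
      exact ((hasDerivAt_id s).const_mul t).neg.congr_deriv (by ring)
    have h2 := ((hasDerivAt_const s (Real.exp (-t))).sub h1.exp).div_const t
    refine h2.congr_deriv ?_
    field_simp
    ring

lemma frullani {s : ℝ} (hs : 0 < s) : Gfr s = Real.log s := by
  have h1 : ∀ u ∈ uIcc 1 s, HasDerivAt Gfr (1/u) u := by
    intro u hu
    have : 0 < u := by
      rcases le_total 1 s with h | h
      · rw [uIcc_of_le h] at hu; linarith [hu.1]
      · rw [uIcc_of_ge h] at hu; linarith [hu.1, hs]
    exact Gfr_hasDerivAt this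
  have h0 : (0:ℝ) ∉ uIcc 1 s := by
    intro h0
    rcases le_total 1 s with h | h
    · rw [uIcc_of_le h] at h0; linarith [h0.1]
    · rw [uIcc_of_ge h] at h0; linarith [h0.1, hs]
  have hii : IntervalIntegrable (fun u : ℝ => 1/u) volume 1 s := by
    apply ContinuousOn.intervalIntegrable
    exact continuousOn_const.div continuousOn_id (fun x hx => ne_of_mem_of_not_mem hx h0)
  have := intervalIntegral.integral_eq_sub_of_hasDerivAt h1 hii
  rw [integral_one_div h0] at this
  have hG1 : Gfr 1 = 0 := by
    unfold Gfr
    simp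
  rw [hG1, sub_zero, div_one] at this
  exact this.symm

lemma integral_inv_sq_Ioi1 : ∫ t in Ioi (1:ℝ), 1/t^2 = 1 := by
  have h := integral_Ioi_rpow_of_lt (by norm_num : (-2:ℝ) < -1) one_pos
  have heq : ∀ t ∈ Ioi (1:ℝ), t ^ (-2:ℝ) = 1/t^2 := by
    intro t ht
    have h0 : (0:ℝ) ≤ t := by linarith [mem_Ioi.mp ht]
    rw [Real.rpow_neg h0, show (2:ℝ) = ((2:ℕ):ℝ) by norm_num, Real.rpow_natCast, one_div]
  rw [setIntegral_congr_fun measurableSet_Ioi heq] at h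
  rw [h]
  norm_num

lemma integral_abs_kk_Ioi1_le {x : ℝ} (hx : 0 ≤ x) :
    ∫ t in Ioi (1:ℝ), |kk t x| ≤ 1 + x := by
  have hmaj := maj_large_integrable x
  have hint : IntegrableOn (fun t => |kk t x|) (Ioi (1:ℝ)) := (kk_integrableOn_Ioi1 hx).abs
  have h1 : ∫ t in Ioi (1:ℝ), |kk t x| ≤ ∫ t in Ioi (1:ℝ), (1/t^2 + x * Real.exp (-t)) := by
    apply setIntegral_mono_on hint hmaj measurableSet_Ioi
    intro t ht
    exact kk_abs_le_large ht hx
  have h2 : ∫ t in Ioi (1:ℝ), (1/t^2 + x * Real.exp (-t))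
      = 1 + x * Real.exp (-1) := by
    rw [integral_add]
    · rw [integral_inv_sq_Ioi1, MeasureTheory.integral_const_mul, integral_exp_neg_Ioi]
    · have h := integrableOn_Ioi_rpow_of_lt (by norm_num : (-2:ℝ) < -1) one_pos
      refine h.congr ?_
      filter_upwards [ae_restrict_mem measurableSet_Ioi] with t ht
      have h0 : (0:ℝ) ≤ t := by linarith [mem_Ioi.mp ht]
      rw [Real.rpow_neg h0, show (2:ℝ) = ((2:ℕ):ℝ) by norm_num, Real.rpow_natCast, one_div]
    · have h : Integrable (fun t => x * Real.exp (-1*t)) (volume.restrict (Ioi (1:ℝ))) :=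
        (exp_neg_integrableOn_Ioi 1 one_pos).const_mul x
      refine h.congr ?_
      filter_upwards with t
      norm_num
  have h3 : x * Real.exp (-1) ≤ x := by
    have : Real.exp (-1) ≤ 1 := Real.exp_le_one_iff.mpr (by norm_num)
    nlinarith
  linarith

lemma integral_abs_kk_Ioc01_le {x : ℝ} (hx : 0 ≤ x) :
    ∫ t in Ioc (0:ℝ) 1, |kk t x| ≤ 3*x + |x * Real.log x| := by
  have hint : IntegrableOn (fun t => |kk t x|) (Ioc (0:ℝ) 1) := (kk_integrableOn_Ioc01 hx).abs
  rcases le_or_gt x 1 with hx1 | hx1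
  · -- x ≤ 1 : constant bound
    have h1 : ∫ t in Ioc (0:ℝ) 1, |kk t x| ≤ ∫ t in Ioc (0:ℝ) 1, (x^2 + x) := by
      apply setIntegral_mono_on hint (by simp) measurableSet_Ioc
      intro t ht
      exact kk_abs_le_small ht.1 ht.2 hx
    have h2 : ∫ t in Ioc (0:ℝ) 1, (x^2 + x : ℝ) = x^2 + x := by
      rw [setIntegral_const]
      simp [Real.volume_Ioc]
    have : x^2 ≤ x := by nlinarith
    have habs : (0:ℝ) ≤ |x * Real.log x| := abs_nonneg _
    linarith
  · -- 1 < x : split at x⁻¹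
    have hx0 : 0 < x := lt_trans one_pos hx1
    have hinv0 : 0 < x⁻¹ := inv_pos.mpr hx0
    have hinv1 : x⁻¹ ≤ 1 := by
      rw [inv_le_one_iff₀]; right; exact hx1.le
    have hsplit : Ioc (0:ℝ) 1 = Ioc 0 x⁻¹ ∪ Ioc x⁻¹ 1 :=
      (Ioc_union_Ioc_eq_Ioc hinv0.le hinv1).symm
    have hdisj : Disjoint (Ioc (0:ℝ) x⁻¹) (Ioc x⁻¹ 1) := Ioc_disjoint_Ioc.mpr ((min_le_left _ _).trans (le_max_right _ _))
    have hintA : IntegrableOn (fun t => |kk t x|) (Ioc (0:ℝ) x⁻¹) :=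
      hint.mono_set (by rw [hsplit]; exact subset_union_left)
    have hintB : IntegrableOn (fun t => |kk t x|) (Ioc x⁻¹ 1) :=
      hint.mono_set (by rw [hsplit]; exact subset_union_right)
    rw [hsplit, setIntegral_union hdisj measurableSet_Ioc hintA hintB]
    -- piece A
    have hA : ∫ t in Ioc (0:ℝ) x⁻¹, |kk t x| ≤ 2*x := by
      have h1 : ∫ t in Ioc (0:ℝ) x⁻¹, |kk t x| ≤ ∫ t in Ioc (0:ℝ) x⁻¹, (x^2 + x) := by
        apply setIntegral_mono_on hintA (by simp) measurableSet_Ioc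
        intro t ht
        exact kk_abs_le_small ht.1 (le_trans ht.2 hinv1) hx
      have h2 : ∫ t in Ioc (0:ℝ) x⁻¹, (x^2 + x : ℝ) = (x^2 + x) * x⁻¹ := by
        rw [setIntegral_const, Real.volume_real_Ioc, smul_eq_mul, sub_zero,
          max_eq_left hinv0.le, mul_comm]
      have h3 : (x^2 + x) * x⁻¹ = x + 1 := by field_simp
      linarith
    -- piece B
    have hB : ∫ t in Ioc x⁻¹ 1, |kk t x| ≤ x * Real.log x + x := by
      have h0uIcc : (0:ℝ) ∉ uIcc x⁻¹ 1 := by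
        rw [uIcc_of_le hinv1]
        intro h; exact absurd h.1 (not_le.mpr hinv0)
      have hii : IntervalIntegrable (fun t : ℝ => x/t + x) volume x⁻¹ 1 := by
        apply ContinuousOn.intervalIntegrable
        apply ContinuousOn.add _ continuousOn_const
        exact continuousOn_const.div continuousOn_id (fun t ht => ne_of_mem_of_not_mem ht h0uIcc)
      have hmajB : IntegrableOn (fun t : ℝ => x/t + x) (Ioc x⁻¹ 1) := hii.1
      have h1 : ∫ t in Ioc x⁻¹ 1, |kk t x| ≤ ∫ t in Ioc x⁻¹ 1, (x/t + x) := by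
        apply setIntegral_mono_on hintB hmajB measurableSet_Ioc
        intro t ht
        exact kk_abs_le_div (lt_trans hinv0 ht.1) hx
      have h2 : ∫ t in Ioc x⁻¹ 1, (x/t + x : ℝ) = x * Real.log x + x * (1 - x⁻¹) := by
        rw [← intervalIntegral.integral_of_le hinv1]
        have hiidiv : IntervalIntegrable (fun t : ℝ => x/t) volume x⁻¹ 1 := by
          apply ContinuousOn.intervalIntegrable
          exact continuousOn_const.div continuousOn_id (fun t ht => ne_of_mem_of_not_mem ht h0uIcc)
        rw [intervalIntegral.integral_add hiidiv intervalIntegrable_const]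
        congr 1
        · have : ∀ t : ℝ, x/t = x * (1/t) := by intro t; ring
          simp_rw [this]
          rw [intervalIntegral.integral_const_mul, integral_one_div h0uIcc]
          rw [one_div, Real.log_inv, Real.log_inv]
          ring
        · simp
          ring
      have h3 : x * (1 - x⁻¹) ≤ x := by
        have : 0 ≤ x * x⁻¹ := by positivity
        nlinarith
      linarith
    have habs : |x * Real.log x| = x * Real.log x := by
      rw [abs_of_nonneg]
      exact mul_nonneg hx0.le (Real.log_nonneg hx1.le)
    rw [habs]
    linarith

lemma integral_abs_kk_le {x : ℝ} (hx : 0 ≤ x) :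
    ∫ t in Ioi (0:ℝ), |kk t x| ≤ 1 + 4*x + |x * Real.log x| := by
  rw [show Ioi (0:ℝ) = Ioc 0 1 ∪ Ioi 1 from (Ioc_union_Ioi_eq_Ioi zero_le_one).symm,
    setIntegral_union (Ioc_disjoint_Ioi le_rfl) measurableSet_Ioi
      (kk_integrableOn_Ioc01 hx).abs (kk_integrableOn_Ioi1 hx).abs]
  linarith [integral_abs_kk_Ioc01_le hx, integral_abs_kk_Ioi1_le hx]

noncomputable def Fk : ℝ → ℝ := fun x => ∫ t in Ioi (0:ℝ), kk t x


lemma frullani_abs_bound {t x : ℝ} (ht : 0 < t) (hx : 0 ≤ x) :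
    |(Real.exp (-t) - Real.exp (-(t*x)))/t| ≤ |1 - x| * Real.exp (-(min 1 x) * t) := by
  rw [abs_div, abs_of_pos ht, div_le_iff₀ ht]
  calc |Real.exp (-t) - Real.exp (-(t*x))| ≤ |t - t*x| * Real.exp (-(min t (t*x))) :=
        abs_exp_sub_exp ht.le (by positivity)
    _ = |1 - x| * Real.exp (-(min 1 x) * t) * t := by
        have hmm : min t (t*x) = t * min 1 x := by
          rcases le_total 1 x with h | h
          · rw [min_eq_left h, min_eq_left (by nlinarith), mul_one]
          · rw [min_eq_right h, min_eq_right (by nlinarith)]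
        rw [hmm, show t - t*x = t * (1-x) by ring, abs_mul, abs_of_pos ht]
        ring_nf

lemma Fk_hasDerivAt {u : ℝ} (hu : 0 < u) : HasDerivAt Fk (Real.log u) u := by
  have hmin : 0 < min 1 (u/2) := lt_min one_pos (half_pos hu)
  have key := hasDerivAt_integral_of_dominated_loc_of_deriv_le
    (F := fun (x : ℝ) (t : ℝ) => kk t x)
    (F' := fun (x : ℝ) (t : ℝ) => (Real.exp (-t) - Real.exp (-(t*x)))/t)
    (μ := volume.restrict (Ioi (0:ℝ))) (x₀ := u)
    (bound := fun t => (1 + 2*u) * Real.exp (-(min 1 (u/2)) * t))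
    (s := Metric.ball u (u/2)) (Metric.ball_mem_nhds u (half_pos hu)) ?_ (kk_integrableOn hu.le) ?_ ?_ ?_ ?_
  · have h2 := key.2
    have : (∫ t in Ioi (0:ℝ), (Real.exp (-t) - Real.exp (-(t*u)))/t) = Real.log u := frullani hu
    rwa [this] at h2
  · filter_upwards with x
    exact (kk_measurable x).aestronglyMeasurable
  · apply Measurable.aestronglyMeasurable; fun_prop
  · filter_upwards [ae_restrict_mem measurableSet_Ioi] with t ht x hxball
    have ht' : (0:ℝ) < t := ht
    have hb := abs_lt.mp (mem_ball_iff_norm.mp hxball)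
    have hx1 : u/2 < x := by linarith [hb.1]
    have hx2 : x < 3*u/2 := by linarith [hb.2]
    have hx0 : 0 ≤ x := by linarith
    rw [Real.norm_eq_abs]
    calc |(Real.exp (-t) - Real.exp (-(t*x)))/t| ≤ |1 - x| * Real.exp (-(min 1 x) * t) :=
          frullani_abs_bound ht' hx0
      _ ≤ (1 + 2*u) * Real.exp (-(min 1 (u/2)) * t) := by
          apply mul_le_mul
          · rw [abs_le]; constructor <;> nlinarith
          · apply Real.exp_le_exp.mpr
            have : min 1 (u/2) ≤ min 1 x := le_min (min_le_left _ _) (by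
              rcases le_total 1 x with h | h
              · exact le_trans (min_le_left _ _) h
              · exact le_trans (min_le_right _ _) hx1.le)
            nlinarith
          · positivity
          · nlinarith
  · exact (exp_neg_integrableOn_Ioi 0 hmin).const_mul _
  · filter_upwards [ae_restrict_mem measurableSet_Ioi] with t ht x _
    have ht' : (0:ℝ) < t := ht
    have h1 : HasDerivAt (fun x : ℝ => -(t*x)) (-t) x := by
      exact ((hasDerivAt_id x).const_mul t).neg.congr_deriv (by ring)
    have h2 : HasDerivAt (fun x : ℝ => Real.exp (-(t*x)) - 1 + t*x*Real.exp (-t))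
        (Real.exp (-(t*x)) * (-t) + t*1*Real.exp (-t)) x :=
      ((h1.exp).sub_const 1).add (((hasDerivAt_id x).const_mul t).mul_const (Real.exp (-t)))
    have h3 := h2.div_const (t^2)
    have heq : (Real.exp (-(t*x)) * (-t) + t*1*Real.exp (-t))/t^2
        = (Real.exp (-t) - Real.exp (-(t*x)))/t := by
      field_simp; ring
    rw [heq] at h3
    exact h3

lemma Fk_tendsto_zero : Tendsto Fk (nhdsWithin 0 (Ioi (0:ℝ))) (nhds 0) := by
  have hmain : Tendsto (fun x => ∫ t in Ioi (0:ℝ), kk t x) (nhdsWithin 0 (Ioi (0:ℝ)))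
      (nhds (∫ t in Ioi (0:ℝ), (0:ℝ))) := by
    apply MeasureTheory.tendsto_integral_filter_of_dominated_convergence
      (bound := fun t => if t ≤ 1 then (2:ℝ) else 1/t^2 + Real.exp (-t))
    · filter_upwards with x
      exact (kk_measurable x).aestronglyMeasurable
    · filter_upwards [Ioc_mem_nhdsGT_of_mem (by norm_num : (0:ℝ) ∈ Ico 0 1)] with x hx
      filter_upwards [ae_restrict_mem measurableSet_Ioi] with t ht
      have ht' : (0:ℝ) < t := ht
      rw [Real.norm_eq_abs]
      rcases le_or_gt t 1 with h | h
      · rw [if_pos h]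
        have := kk_abs_le_small ht' h hx.1.le
        nlinarith [hx.1, hx.2, sq_nonneg x]
      · rw [if_neg (not_le.mpr h)]
        have := kk_abs_le_large h hx.1.le
        have h2 : x * Real.exp (-t) ≤ 1 * Real.exp (-t) := by
          apply mul_le_mul_of_nonneg_right hx.2 (Real.exp_pos _).le
        linarith
    · -- integrability of the bound
      have h1 : IntegrableOn (fun t : ℝ => if t ≤ 1 then (2:ℝ) else 1/t^2 + Real.exp (-t))
          (Ioc (0:ℝ) 1) := by
        refine (integrableOn_const (s := Ioc (0:ℝ) 1) (μ := volume) (C := (2:ℝ)) ?_).congr ?_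
        · rw [Real.volume_Ioc]; exact ENNReal.ofReal_ne_top
        · filter_upwards [ae_restrict_mem measurableSet_Ioc] with t ht
          rw [if_pos ht.2]
      have h2 : IntegrableOn (fun t : ℝ => if t ≤ 1 then (2:ℝ) else 1/t^2 + Real.exp (-t))
          (Ioi (1:ℝ)) := by
        refine (maj_large_integrable 1).congr ?_
        filter_upwards [ae_restrict_mem measurableSet_Ioi] with t ht
        rw [if_neg (not_le.mpr (mem_Ioi.mp ht)), one_mul]
      rw [show Ioi (0:ℝ) = Ioc 0 1 ∪ Ioi 1 from (Ioc_union_Ioi_eq_Ioi zero_le_one).symm]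
      exact h1.union h2
    · filter_upwards [ae_restrict_mem measurableSet_Ioi] with t ht
      have hc : ContinuousAt (fun x => kk t x) 0 := by
        unfold kk
        fun_prop
      have h00 : kk t 0 = 0 := by unfold kk; simp
      have : Tendsto (fun x => kk t x) (nhdsWithin 0 (Ioi (0:ℝ))) (nhds (kk t 0)) :=
        hc.tendsto.mono_left nhdsWithin_le_nhds
      rwa [h00] at this
  exact (by simpa using hmain : Tendsto (fun x => ∫ t in Ioi (0:ℝ), kk t x) (nhdsWithin 0 (Ioi (0:ℝ))) (nhds 0))

lemma Fk_eq {x : ℝ} (hx : 0 < x) : Fk x = x * Real.log x - x := by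
  -- FTC on [c, x] for 0 < c ≤ x, then c → 0⁺
  have key : ∀ c, 0 < c → c ≤ x → Fk x - Fk c = x * Real.log x - x - (c * Real.log c - c) := by
    intro c hc hcx
    have h0 : (0:ℝ) ∉ uIcc c x := by
      rw [uIcc_of_le hcx]
      intro h; exact absurd h.1 (not_le.mpr hc)
    have hderiv : ∀ u ∈ uIcc c x, HasDerivAt Fk (Real.log u) u := by
      intro u hu
      rw [uIcc_of_le hcx] at hu
      exact Fk_hasDerivAt (lt_of_lt_of_le hc hu.1)
    have hii : IntervalIntegrable Real.log volume c x := intervalIntegral.intervalIntegrable_log h0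
    have := intervalIntegral.integral_eq_sub_of_hasDerivAt hderiv hii
    rw [integral_log] at this
    linarith [this]
  have hev : ∀ᶠ c in nhdsWithin 0 (Ioi (0:ℝ)),
      Fk x - Fk c = x * Real.log x - x - (c * Real.log c - c) := by
    filter_upwards [Ioc_mem_nhdsGT_of_mem (by constructor <;> [exact le_rfl; exact hx] : (0:ℝ) ∈ Ico 0 x)] with c hc
    exact key c hc.1 hc.2
  have hlhs : Tendsto (fun c => Fk x - Fk c) (nhdsWithin 0 (Ioi (0:ℝ))) (nhds (Fk x - 0)) :=
    tendsto_const_nhds.sub Fk_tendsto_zero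
  have hclogc : Tendsto (fun c : ℝ => c * Real.log c) (nhdsWithin 0 (Ioi (0:ℝ))) (nhds 0) := by
    have := tendsto_log_mul_rpow_nhdsGT_zero one_pos
    have heq : (fun c : ℝ => Real.log c * c ^ (1:ℝ)) =ᶠ[nhdsWithin 0 (Ioi (0:ℝ))] fun c => c * Real.log c := by
      filter_upwards [self_mem_nhdsWithin] with c hc
      rw [Real.rpow_one]; ring
    exact (this.congr' heq)
  have hrhs : Tendsto (fun c : ℝ => x * Real.log x - x - (c * Real.log c - c))
      (nhdsWithin 0 (Ioi (0:ℝ))) (nhds (x * Real.log x - x - (0 - 0))) := by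
    apply Tendsto.sub tendsto_const_nhds
    exact hclogc.sub (tendsto_nhdsWithin_of_tendsto_nhds tendsto_id)
  have hne : (nhdsWithin 0 (Ioi (0:ℝ))).NeBot := by
    exact nhdsGT_neBot 0
  have := tendsto_nhds_unique (hlhs.congr' hev) hrhs
  linarith [this]

lemma Fk_eq' {x : ℝ} (hx : 0 ≤ x) : Fk x = x * Real.log x - x := by
  rcases eq_or_lt_of_le hx with h | h
  · rw [← h]
    unfold Fk
    have : ∀ t, kk t 0 = 0 := by intro t; unfold kk; simp
    simp [this]
  · exact Fk_eq h

lemma fubini_key {Ω : Type*} [MeasurableSpace Ω] (μ : Measure Ω) [IsProbabilityMeasure μ]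
    (Z : Ω → ℝ) (hZ : Measurable Z) (hZpos : ∀ o, 0 ≤ Z o)
    (hZint : Integrable Z μ) (hZlog : Integrable (fun o => Z o * Real.log (Z o)) μ) :
    Integrable (fun t => ∫ o, kk t (Z o) ∂μ) (volume.restrict (Ioi (0:ℝ))) ∧
    ∫ t in Ioi (0:ℝ), (∫ o, kk t (Z o) ∂μ)
      = (∫ o, Z o * Real.log (Z o) ∂μ) - ∫ o, Z o ∂μ := by
  have hmeas : AEStronglyMeasurable (fun p : Ω × ℝ => kk p.2 (Z p.1))
      (μ.prod (volume.restrict (Ioi (0:ℝ)))) := by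
    apply Measurable.aestronglyMeasurable
    unfold kk
    fun_prop
  have hInt : Integrable (fun p : Ω × ℝ => kk p.2 (Z p.1))
      (μ.prod (volume.restrict (Ioi (0:ℝ)))) := by
    rw [integrable_prod_iff hmeas]
    constructor
    · filter_upwards with o
      exact kk_integrableOn (hZpos o)
    · have hbound : Integrable (fun o => 1 + 4*(Z o) + |Z o * Real.log (Z o)|) μ :=
        ((integrable_const 1).add (hZint.const_mul 4)).add hZlog.abs
      refine Integrable.mono' hbound hmeas.norm.integral_prod_right' ?_
      filter_upwards with o
      have hnn : 0 ≤ ∫ t in Ioi (0:ℝ), ‖kk t (Z o)‖ :=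
        integral_nonneg (fun t => norm_nonneg _)
      rw [Real.norm_eq_abs, abs_of_nonneg hnn]
      calc (∫ t in Ioi (0:ℝ), ‖kk t (Z o)‖) = ∫ t in Ioi (0:ℝ), |kk t (Z o)| := by
            simp [Real.norm_eq_abs]
        _ ≤ 1 + 4*(Z o) + |Z o * Real.log (Z o)| := integral_abs_kk_le (hZpos o)
  constructor
  · exact hInt.integral_prod_right
  · have hswap := integral_integral_swap (f := fun (o : Ω) (t : ℝ) => kk t (Z o)) hInt
    rw [← hswap]
    have : (fun o => ∫ t in Ioi (0:ℝ), kk t (Z o)) = fun o => Z o * Real.log (Z o) - Z o := by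
      funext o
      exact Fk_eq' (hZpos o)
    rw [this, integral_sub hZlog hZint]

/-- If `X` and `Y` are nonnegative integrable random variables with
`X ≤_Lt Y` (i.e. `𝔼[exp(−λX)] ≥ 𝔼[exp(−λY)]` for all `λ ≥ 0`), `𝔼[X] = 𝔼[Y]`, and
`X log X`, `Y log Y` are integrable (with `0 log 0 = 0`, which is Lean's convention
since `Real.log 0 = 0`), then `𝔼[X log X] ≥ 𝔼[Y log Y]`. -/
theorem xLogX_ge_of_laplaceOrder
    {Ω : Type*} [MeasurableSpace Ω] (μ : Measure Ω) [IsProbabilityMeasure μ]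
    (X Y : Ω → ℝ) (hX : Measurable X) (hY : Measurable Y)
    (hXpos : ∀ o, 0 ≤ X o) (hYpos : ∀ o, 0 ≤ Y o)
    (hXint : Integrable X μ) (hYint : Integrable Y μ)
    (hLt : ∀ lam : ℝ, 0 ≤ lam →
      ∫ o, Real.exp (-lam * Y o) ∂μ ≤ ∫ o, Real.exp (-lam * X o) ∂μ)
    (hmean : ∫ o, X o ∂μ = ∫ o, Y o ∂μ)
    (hXlog : Integrable (fun o => X o * Real.log (X o)) μ)
    (hYlog : Integrable (fun o => Y o * Real.log (Y o)) μ) :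
    ∫ o, Y o * Real.log (Y o) ∂μ ≤ ∫ o, X o * Real.log (X o) ∂μ := by
  obtain ⟨hXf, hXeq⟩ := fubini_key μ X hX hXpos hXint hXlog
  obtain ⟨hYf, hYeq⟩ := fubini_key μ Y hY hYpos hYint hYlog
  -- the integral of the difference
  have hdiff : ∫ t in Ioi (0:ℝ), ((∫ o, kk t (X o) ∂μ) - (∫ o, kk t (Y o) ∂μ))
      = ((∫ o, X o * Real.log (X o) ∂μ) - ∫ o, X o ∂μ)
        - ((∫ o, Y o * Real.log (Y o) ∂μ) - ∫ o, Y o ∂μ) := by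
    rw [integral_sub hXf hYf, hXeq, hYeq]
  -- pointwise nonnegativity of the difference
  have hptwise : ∀ t ∈ Ioi (0:ℝ),
      0 ≤ (∫ o, kk t (X o) ∂μ) - (∫ o, kk t (Y o) ∂μ) := by
    intro t ht
    have ht' : (0:ℝ) < t := ht
    -- decompose the integral of kk t (Z o)
    have decomp : ∀ (Z : Ω → ℝ), Measurable Z → (∀ o, 0 ≤ Z o) → Integrable Z μ →
        (∫ o, kk t (Z o) ∂μ)
          = (1/t^2) * (∫ o, Real.exp (-t * Z o) ∂μ) - 1/t^2
            + (Real.exp (-t)/t) * ∫ o, Z o ∂μ := by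
      intro Z hZ hZpos hZint
      have hexp : Integrable (fun o => Real.exp (-t * Z o)) μ := by
        refine Integrable.mono' (integrable_const 1) ?_ ?_
        · apply Measurable.aestronglyMeasurable; fun_prop
        · filter_upwards with o
          rw [Real.norm_eq_abs, abs_exp]
          apply Real.exp_le_one_iff.mpr
          have := hZpos o
          nlinarith
      have hfun : (fun o => kk t (Z o))
          = fun o => (1/t^2) * Real.exp (-t * Z o) + ((-(1/t^2)) + (Real.exp (-t)/t) * Z o) := by
        funext o
        unfold kk
        rw [neg_mul]
        field_simp
        ring
      have i1 : Integrable (fun o => (1/t^2) * Real.exp (-t * Z o)) μ := hexp.const_mul _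
      have i3 : Integrable (fun o => (Real.exp (-t)/t) * Z o) μ := hZint.const_mul _
      have i2 : Integrable (fun o => (-(1/t^2)) + (Real.exp (-t)/t) * Z o) μ :=
        (integrable_const _).add i3
      rw [hfun, integral_add i1 i2, integral_const_mul,
        integral_add (integrable_const _) i3, integral_const, integral_const_mul]
      simp
      ring
    rw [decomp X hX hXpos hXint, decomp Y hY hYpos hYint, ← hmean]
    have hle := hLt t ht'.le
    have h2 : (0:ℝ) < 1/t^2 := by positivity
    nlinarith
  have hnonneg : 0 ≤ ∫ t in Ioi (0:ℝ), ((∫ o, kk t (X o) ∂μ) - (∫ o, kk t (Y o) ∂μ)) :=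
    setIntegral_nonneg measurableSet_Ioi hptwise
  rw [hdiff] at hnonneg
  linarith [hnonneg, hmean]
end

section
/- Let X = (X_1, …, X_n) be an associated random vector and let f_1, …, f_n : ℝ → ℝ be nonnegative nondecreasing functions such that all the expectations below are finite. Then 𝔼[∏_{i=1}^n f_i(X_i)] ≥ ∏_{i=1}^n 𝔼[f_i(X_i)]. -/
open MeasureTheory Finset

/-- An `ℝ^ι`-valued random vector `X` is *associated* if
`𝔼[f(X) g(X)] ≥ 𝔼[f(X)] 𝔼[g(X)]` for all coordinatewise non-decreasing
`f, g : (ι → ℝ) → ℝ` for which the expectations involved exist. -/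
def IsAssociated {Ω ι : Type*} [MeasurableSpace Ω] (μ : Measure Ω) (X : ι → Ω → ℝ) : Prop :=
  ∀ f g : (ι → ℝ) → ℝ, Monotone f → Monotone g →
    Integrable (fun o => f (fun i => X i o)) μ →
    Integrable (fun o => g (fun i => X i o)) μ →
    Integrable (fun o => f (fun i => X i o) * g (fun i => X i o)) μ →
    (∫ o, f (fun i => X i o) ∂μ) * ∫ o, g (fun i => X i o) ∂μ
      ≤ ∫ o, f (fun i => X i o) * g (fun i => X i o) ∂μ

/-- Integrability of a bounded a.e.-strongly-measurable function on a finite measure space. -/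
lemma integrable_of_bdd {Ω : Type*} [MeasurableSpace Ω] {μ : Measure Ω} [IsFiniteMeasure μ]
    {g : Ω → ℝ} (hm : AEStronglyMeasurable g μ) {C : ℝ} (hb : ∀ o, ‖g o‖ ≤ C) :
    Integrable g μ :=
  ⟨hm, HasFiniteIntegral.of_bounded (Filter.Eventually.of_forall hb)⟩

/-- A product of nonnegative monotone coordinate functions is monotone. -/
lemma monotone_prod_coord {n : ℕ} (f : Fin n → ℝ → ℝ) (hmono : ∀ i, Monotone (f i))
    (hpos : ∀ i x, 0 ≤ f i x) (s : Finset (Fin n)) :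
    Monotone fun x : Fin n → ℝ => ∏ i ∈ s, f i (x i) := by
  intro x y hxy
  exact Finset.prod_le_prod (fun i _ => hpos i (x i)) (fun i _ => hmono i (hxy i))

/-- Bounded case, by induction over the finset of indices. -/
lemma aux_bounded {Ω : Type*} [MeasurableSpace Ω] (μ : Measure Ω) [IsProbabilityMeasure μ]
    (n : ℕ) (X : Fin n → Ω → ℝ) (hX : IsAssociated μ X)
    (f : Fin n → ℝ → ℝ) (hmono : ∀ i, Monotone (f i)) (hpos : ∀ i x, 0 ≤ f i x)
    (C : ℝ) (_hC : 0 ≤ C) (hbdd : ∀ i x, f i x ≤ C)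
    (hmeas : ∀ i, AEStronglyMeasurable (fun o => f i (X i o)) μ)
    (s : Finset (Fin n)) :
    ∏ i ∈ s, ∫ o, f i (X i o) ∂μ ≤ ∫ o, ∏ i ∈ s, f i (X i o) ∂μ := by
  classical
  -- integrability of any partial product
  have hintprod : ∀ t : Finset (Fin n),
      Integrable (fun o => ∏ i ∈ t, f i (X i o)) μ := by
    intro t
    refine integrable_of_bdd (Finset.aestronglyMeasurable_fun_prod _ fun i _ => hmeas i)
      (C := C ^ t.card) (fun o => ?_)
    have h0 : 0 ≤ ∏ i ∈ t, f i (X i o) :=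
      Finset.prod_nonneg fun i _ => hpos i _
    rw [Real.norm_eq_abs, abs_of_nonneg h0]
    calc ∏ i ∈ t, f i (X i o) ≤ ∏ _i ∈ t, C :=
          Finset.prod_le_prod (fun i _ => hpos i _) (fun i _ => hbdd i _)
      _ = C ^ t.card := by rw [Finset.prod_const]
  induction s using Finset.induction_on with
  | empty => simp
  | @insert a s ha ih =>
      have hFmono : Monotone fun x : Fin n → ℝ => ∏ i ∈ s, f i (x i) :=
        monotone_prod_coord f hmono hpos s
      have hGmono : Monotone fun x : Fin n → ℝ => f a (x a) :=
        fun x y hxy => hmono a (hxy a)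
      have hFint : Integrable (fun o => ∏ i ∈ s, f i (X i o)) μ := hintprod s
      have hGint : Integrable (fun o => f a (X a o)) μ :=
        integrable_of_bdd (hmeas a) (C := C) fun o => by
          rw [Real.norm_eq_abs, abs_of_nonneg (hpos a _)]; exact hbdd a _
      have hFGint : Integrable (fun o => (∏ i ∈ s, f i (X i o)) * f a (X a o)) μ := by
        have := hintprod (insert a s)
        simpa [Finset.prod_insert ha, mul_comm] using this
      have hassoc := hX (fun x => ∏ i ∈ s, f i (x i)) (fun x => f a (x a))
        hFmono hGmono hFint hGint hFGint
      have hGnn : 0 ≤ ∫ o, f a (X a o) ∂μ :=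
        integral_nonneg fun o => hpos a _
      calc ∏ i ∈ insert a s, ∫ o, f i (X i o) ∂μ
          = (∫ o, f a (X a o) ∂μ) * ∏ i ∈ s, ∫ o, f i (X i o) ∂μ := by
            rw [Finset.prod_insert ha]
        _ ≤ (∫ o, f a (X a o) ∂μ) * ∫ o, ∏ i ∈ s, f i (X i o) ∂μ :=
            mul_le_mul_of_nonneg_left ih hGnn
        _ = (∫ o, ∏ i ∈ s, f i (X i o) ∂μ) * ∫ o, f a (X a o) ∂μ := mul_comm _ _
        _ ≤ ∫ o, (∏ i ∈ s, f i (X i o)) * f a (X a o) ∂μ := hassoc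
        _ = ∫ o, ∏ i ∈ insert a s, f i (X i o) ∂μ := by
            congr 1; funext o; rw [Finset.prod_insert ha, mul_comm]

/-- If `X = (X_1, …, X_n)` is an associated random vector and
`f_1, …, f_n : ℝ → ℝ` are nonnegative nondecreasing functions such that all the
expectations involved are finite, then `𝔼[∏ f_i(X_i)] ≥ ∏ 𝔼[f_i(X_i)]`. -/
theorem prod_expectation_le_of_associated
    {Ω : Type*} [MeasurableSpace Ω] (μ : Measure Ω) [IsProbabilityMeasure μ]
    (n : ℕ) (X : Fin n → Ω → ℝ) (hX : IsAssociated μ X)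
    (f : Fin n → ℝ → ℝ) (hmono : ∀ i, Monotone (f i)) (hpos : ∀ i x, 0 ≤ f i x)
    (hint : ∀ i, Integrable (fun o => f i (X i o)) μ)
    (hprod : Integrable (fun o => ∏ i : Fin n, f i (X i o)) μ) :
    ∏ i : Fin n, ∫ o, f i (X i o) ∂μ ≤ ∫ o, ∏ i : Fin n, f i (X i o) ∂μ := by
  classical
  -- truncations
  set g : ℕ → Fin n → ℝ → ℝ := fun M i x => min (f i x) M with hg
  have hgmono : ∀ M i, Monotone (g M i) := fun M i => (hmono i).min monotone_const
  have hgpos : ∀ M i x, 0 ≤ g M i x := fun M i x =>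
    le_min (hpos i x) (Nat.cast_nonneg M)
  have hgbdd : ∀ M i x, g M i x ≤ (M : ℝ) := fun M i x => min_le_right _ _
  have hgle : ∀ M i x, g M i x ≤ f i x := fun M i x => min_le_left _ _
  have hgmeas : ∀ M i, AEStronglyMeasurable (fun o => g M i (X i o)) μ := fun M i =>
    ((hint i).aemeasurable.min aemeasurable_const).aestronglyMeasurable
  -- key bound for each M
  have key : ∀ M : ℕ, ∏ i : Fin n, ∫ o, g M i (X i o) ∂μ
      ≤ ∫ o, ∏ i : Fin n, f i (X i o) ∂μ := by
    intro M
    have h1 := aux_bounded μ n X hX (g M) (hgmono M) (hgpos M) (M : ℝ)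
      (Nat.cast_nonneg M) (hgbdd M) (hgmeas M) Finset.univ
    refine h1.trans (integral_mono ?_ hprod ?_)
    · refine integrable_of_bdd
        (Finset.aestronglyMeasurable_fun_prod _ fun i _ => hgmeas M i)
        (C := (M : ℝ) ^ n) (fun o => ?_)
      rw [Real.norm_eq_abs, abs_of_nonneg (Finset.prod_nonneg fun i _ => hgpos M i _)]
      calc ∏ i : Fin n, g M i (X i o) ≤ ∏ _i : Fin n, (M : ℝ) :=
            Finset.prod_le_prod (fun i _ => hgpos M i _) (fun i _ => hgbdd M i _)
        _ = (M : ℝ) ^ n := by simp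
    · intro o
      exact Finset.prod_le_prod (fun i _ => hgpos M i _) (fun i _ => hgle M i _)
  -- convergence of each truncated expectation
  have hlim : ∀ i : Fin n, Filter.Tendsto (fun M : ℕ => ∫ o, g M i (X i o) ∂μ)
      Filter.atTop (nhds (∫ o, f i (X i o) ∂μ)) := by
    intro i
    refine tendsto_integral_of_dominated_convergence (fun o => f i (X i o))
      (fun M => hgmeas M i) (hint i) ?_ ?_
    · intro M
      filter_upwards with o
      rw [Real.norm_eq_abs, abs_of_nonneg (hgpos M i _)]
      exact hgle M i _
    · filter_upwards with o
      have : ∀ᶠ M : ℕ in Filter.atTop, g M i (X i o) = f i (X i o) := by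
        refine Filter.eventually_atTop.2 ⟨⌈f i (X i o)⌉₊, fun M hM => ?_⟩
        exact min_eq_left ((Nat.le_ceil _).trans (Nat.cast_le.2 hM))
      exact Filter.Tendsto.congr' (this.mono fun M h => h.symm) tendsto_const_nhds
  have hlimprod : Filter.Tendsto (fun M : ℕ => ∏ i : Fin n, ∫ o, g M i (X i o) ∂μ)
      Filter.atTop (nhds (∏ i : Fin n, ∫ o, f i (X i o) ∂μ)) :=
    tendsto_finset_prod _ fun i _ => hlim i
  exact le_of_tendsto' hlimprod key
end

section
/- Let X and Y be nonnegative random variables, and let ε and ε' be exponential random variables with rate 1, with ε independent of X and ε' independent of Y. Then X ≤_Lt Y if and only if X/ε ≤_st Y/ε', i.e. if and only if ℙ(X/ε > t) ≤ ℙ(Y/ε' > t) for all t ∈ ℝ. -/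
open MeasureTheory ProbabilityTheory
open Real Set
open scoped ENNReal NNReal

lemma expMeasure_Iic (a : ℝ) :
    expMeasure 1 (Set.Iic a) = ENNReal.ofReal (if 0 ≤ a then 1 - Real.exp (-a) else 0) := by
  rw [expMeasure, gammaMeasure, withDensity_apply _ measurableSet_Iic]
  have := lintegral_exponentialPDF_eq_antiDeriv (r := 1) one_pos a
  simpa [exponentialPDF, exponentialPDFReal, gammaPDF] using this

lemma expMeasure_Iio (a : ℝ) :
    expMeasure 1 (Set.Iio a) = ENNReal.ofReal (if 0 ≤ a then 1 - Real.exp (-a) else 0) := by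
  have hsing : expMeasure 1 {a} = 0 := by
    rw [expMeasure, gammaMeasure, withDensity_apply _ (measurableSet_singleton a)]
    exact setLIntegral_measure_zero _ _ (measure_singleton a)
  rw [← expMeasure_Iic]
  refine le_antisymm (measure_mono Iio_subset_Iic_self) ?_
  calc expMeasure 1 (Iic a) = expMeasure 1 (Iio a ∪ {a}) := by rw [Iio_union_right]
    _ ≤ expMeasure 1 (Iio a) + expMeasure 1 {a} := measure_union_le _ _
    _ = expMeasure 1 (Iio a) := by rw [hsing, add_zero]

example : True := trivial

lemma exp_integrable {Ω : Type*} [MeasurableSpace Ω] (μ : Measure Ω) [IsProbabilityMeasure μ]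
    (Z : Ω → ℝ) (hZ : Measurable Z) (hZpos : ∀ o, 0 ≤ Z o) (c : ℝ) (hc : 0 ≤ c) :
    Integrable (fun o => Real.exp (-c * Z o)) μ := by
  refine Integrable.mono' (integrable_const 1)
    ((Real.measurable_exp.comp (hZ.const_mul (-c))).aestronglyMeasurable) ?_
  refine Filter.Eventually.of_forall fun o => ?_
  rw [Real.norm_eq_abs, abs_of_pos (Real.exp_pos _)]
  exact Real.exp_le_one_iff.mpr (by nlinarith [hZpos o])

lemma key {Ω : Type*} [MeasurableSpace Ω] (μ : Measure Ω) [IsProbabilityMeasure μ]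
    (Z e : Ω → ℝ) (hZ : Measurable Z) (he : Measurable e) (hZpos : ∀ o, 0 ≤ Z o)
    (helaw : Measure.map e μ = expMeasure 1) (hind : IndepFun Z e μ)
    (t : ℝ) (ht : 0 < t) :
    μ {o | t < Z o / e o} = ENNReal.ofReal (1 - ∫ o, Real.exp (-t⁻¹ * Z o) ∂μ) := by
  haveI : IsProbabilityMeasure (expMeasure 1) := isProbabilityMeasure_expMeasure one_pos
  have hepos : ∀ᵐ o ∂μ, 0 < e o := by
    have h0 : μ (e ⁻¹' Iic 0) = 0 := by
      rw [← Measure.map_apply he measurableSet_Iic, helaw, expMeasure_Iic]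
      simp
    rw [ae_iff]
    convert h0 using 2
    ext o; simp [not_lt]
  have hcong : μ {o | t < Z o / e o} = μ {o | e o < Z o / t} := by
    refine measure_congr (Filter.eventuallyEq_set.mpr ?_)
    filter_upwards [hepos] with o ho
    show t < Z o / e o ↔ e o < Z o / t
    rw [lt_div_iff₀ ho, lt_div_iff₀ ht, mul_comm]
  have hms : MeasurableSet {p : ℝ × ℝ | p.2 < p.1 / t} :=
    measurableSet_lt measurable_snd (measurable_fst.div_const t)
  have hexp : Integrable (fun o => Real.exp (-t⁻¹ * Z o)) μ :=
    exp_integrable μ Z hZ hZpos t⁻¹ (by positivity)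
  rw [hcong,
    show {o | e o < Z o / t} = (fun o => (Z o, e o)) ⁻¹' {p : ℝ × ℝ | p.2 < p.1 / t} from rfl,
    ← Measure.map_apply (hZ.prodMk he) hms,
    (indepFun_iff_map_prod_eq_prod_map_map hZ.aemeasurable he.aemeasurable).mp hind, helaw,
    Measure.prod_apply hms]
  have hpre : ∀ x : ℝ, (Prod.mk x ⁻¹' {p : ℝ × ℝ | p.2 < p.1 / t}) = Iio (x / t) :=
    fun x => rfl
  calc ∫⁻ x, expMeasure 1 (Prod.mk x ⁻¹' {p : ℝ × ℝ | p.2 < p.1 / t}) ∂(Measure.map Z μ)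
      = ∫⁻ x, ENNReal.ofReal (if 0 ≤ x/t then 1 - Real.exp (-(x/t)) else 0)
          ∂(Measure.map Z μ) := by
        simp_rw [hpre, expMeasure_Iio]
    _ = ∫⁻ o, ENNReal.ofReal (if 0 ≤ Z o/t then 1 - Real.exp (-(Z o/t)) else 0) ∂μ := by
        refine lintegral_map ?_ hZ
        refine ENNReal.measurable_ofReal.comp (Measurable.ite ?_ ?_ measurable_const)
        · exact measurableSet_le measurable_const (measurable_id.div_const t)
        · exact measurable_const.sub ((measurable_id.div_const t).neg.exp)
    _ = ∫⁻ o, ENNReal.ofReal (1 - Real.exp (-t⁻¹ * Z o)) ∂μ := by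
        congr 1; funext o
        rw [if_pos (div_nonneg (hZpos o) ht.le)]
        congr 1
        ring
    _ = ENNReal.ofReal (∫ o, (1 - Real.exp (-t⁻¹ * Z o)) ∂μ) := by
        refine (ofReal_integral_eq_lintegral_ofReal ((integrable_const 1).sub hexp) ?_).symm
        refine Filter.Eventually.of_forall fun o => ?_
        simp only [Pi.zero_apply, Pi.sub_apply, sub_nonneg]
        have h1 : (0:ℝ) ≤ t⁻¹ := inv_nonneg.mpr ht.le
        have h2 : -t⁻¹ * Z o ≤ 0 := by
          rw [neg_mul]; exact neg_nonpos.mpr (mul_nonneg h1 (hZpos o))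
        exact Real.exp_le_one_iff.mpr h2
    _ = ENNReal.ofReal (1 - ∫ o, Real.exp (-t⁻¹ * Z o) ∂μ) := by
        rw [integral_sub (integrable_const 1) hexp, integral_const]
        simp

lemma eps_ae_pos {Ω : Type*} [MeasurableSpace Ω] (μ : Measure Ω)
    (e : Ω → ℝ) (he : Measurable e) (helaw : Measure.map e μ = expMeasure 1) :
    ∀ᵐ o ∂μ, 0 < e o := by
  have h0 : μ (e ⁻¹' Iic 0) = 0 := by
    rw [← Measure.map_apply he measurableSet_Iic, helaw, expMeasure_Iic]
    simp
  rw [ae_iff]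
  convert h0 using 2
  ext o; simp [not_lt]


/-- Let `X` and `Y` be nonnegative random variables, and let `ε`, `ε'` be
rate-one exponential random variables with `ε` independent of `X` and `ε'` independent of
`Y`.  Then `X ≤_Lt Y` (i.e. `𝔼[exp(−λX)] ≥ 𝔼[exp(−λY)]` for all `λ ≥ 0`) if and only if
`X/ε ≤_st Y/ε'` (i.e. `ℙ(X/ε > t) ≤ ℙ(Y/ε' > t)` for all `t ∈ ℝ`). -/
theorem laplaceOrder_iff_div_exponential_stochOrder
    {Ω : Type*} [MeasurableSpace Ω] (μ : Measure Ω) [IsProbabilityMeasure μ]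
    (X Y ε ε' : Ω → ℝ) (hX : Measurable X) (hY : Measurable Y)
    (hε : Measurable ε) (hε' : Measurable ε')
    (hXpos : ∀ o, 0 ≤ X o) (hYpos : ∀ o, 0 ≤ Y o)
    (hεlaw : Measure.map ε μ = expMeasure 1) (hε'law : Measure.map ε' μ = expMeasure 1)
    (hindep₁ : IndepFun X ε μ) (hindep₂ : IndepFun Y ε' μ) :
    (∀ lam : ℝ, 0 ≤ lam →
        ∫ o, Real.exp (-lam * Y o) ∂μ ≤ ∫ o, Real.exp (-lam * X o) ∂μ)
      ↔ (∀ t : ℝ, μ {o | t < X o / ε o} ≤ μ {o | t < Y o / ε' o}) := by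
  constructor
  · intro h
    have hpos : ∀ t : ℝ, 0 < t → μ {o | t < X o / ε o} ≤ μ {o | t < Y o / ε' o} := by
      intro t ht
      rw [key μ X ε hX hε hXpos hεlaw hindep₁ t ht,
        key μ Y ε' hY hε' hYpos hε'law hindep₂ t ht]
      have := h t⁻¹ (inv_nonneg.mpr ht.le)
      exact ENNReal.ofReal_le_ofReal (by linarith)
    intro t
    rcases lt_trichotomy t 0 with htneg | rfl | htpos
    · have hpos' := eps_ae_pos μ ε' hε' hε'law
      have hae : ∀ᵐ o ∂μ, o ∈ {o | t < Y o / ε' o} := by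
        filter_upwards [hpos'] with o ho
        exact htneg.trans_le (div_nonneg (hYpos o) ho.le)
      have h1 : μ {o | t < Y o / ε' o} = 1 := by
        refine le_antisymm prob_le_one ?_
        have : μ {o | ¬ (t < Y o / ε' o)} = 0 := by
          rw [← ae_iff]; exact hae
        calc (1 : ℝ≥0∞) = μ Set.univ := measure_univ.symm
          _ ≤ μ {o | t < Y o / ε' o} + μ {o | ¬ (t < Y o / ε' o)} := by
              refine le_trans (measure_mono ?_) (measure_union_le _ _)
              intro o _; by_cases hov : t < Y o / ε' o
              · exact Or.inl hov
              · exact Or.inr hov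
          _ = μ {o | t < Y o / ε' o} := by rw [this, add_zero]
      exact h1 ▸ prob_le_one
    · have hmono : Monotone (fun n : ℕ => {o | 1/(n+1:ℝ) < X o / ε o}) := by
        intro m n hmn o ho
        simp only [Set.mem_setOf_eq] at ho ⊢
        refine lt_of_le_of_lt ?_ ho
        have hm : (0:ℝ) < m + 1 := by positivity
        apply one_div_le_one_div_of_le hm
        have : (m:ℝ) ≤ n := Nat.cast_le.mpr hmn
        linarith
      have hunion : {o | (0:ℝ) < X o / ε o} = ⋃ n : ℕ, {o | 1/(n+1:ℝ) < X o / ε o} := by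
        ext o
        simp only [Set.mem_iUnion, Set.mem_setOf_eq]
        constructor
        · exact fun h0 => exists_nat_one_div_lt h0
        · rintro ⟨n, hn⟩; exact lt_trans (by positivity) hn
      rw [hunion, hmono.directed_le.measure_iUnion]
      refine iSup_le fun n => (hpos (1/(n+1:ℝ)) (by positivity)).trans
        (measure_mono fun o ho => ?_)
      simp only [Set.mem_setOf_eq] at ho ⊢
      exact lt_trans (by positivity) ho
    · exact hpos t htpos
  · intro h lam hlam
    rcases hlam.eq_or_lt with heq | hlt
    · simp [← heq]
    · have ht : 0 < lam⁻¹ := inv_pos.mpr hlt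
      have hkey := h lam⁻¹
      rw [key μ X ε hX hε hXpos hεlaw hindep₁ lam⁻¹ ht,
        key μ Y ε' hY hε' hYpos hε'law hindep₂ lam⁻¹ ht, inv_inv] at hkey
      have hYint : Integrable (fun o => Real.exp (-lam * Y o)) μ :=
        exp_integrable μ Y hY hYpos lam hlam
      have hYle : ∫ o, Real.exp (-lam * Y o) ∂μ ≤ 1 := by
        calc ∫ o, Real.exp (-lam * Y o) ∂μ ≤ ∫ _, (1:ℝ) ∂μ := by
              refine integral_mono hYint (integrable_const 1) fun o => ?_
              refine Real.exp_le_one_iff.mpr ?_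
              rw [neg_mul]
              exact neg_nonpos.mpr (mul_nonneg hlam (hYpos o))
          _ = 1 := by simp
      have := (ENNReal.ofReal_le_ofReal_iff (by linarith)).mp hkey
      linarith
end
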